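/- Let Δ be the standard 2s×2s symplectic matrix (block-diagonal with blocks [[0, −1], [1, 0]]), α a real symmetric positive definite 2s×2s matrix, and T a real matrix with TᵀΔT = Δ and TᵀαT block-diagonal with blocks d_j·I₂, d_j > 0. Then: (a) the complex Hermitian matrix α + (i/2)Δ is positive semidefinite if and only if d_j ≥ 1/2 for all j; and (b) the complex Hermitian matrix α − (i/2)Δ is positive definite (equivalently, positive semidefinite and nondegenerate) if and only if d_j > 1/2 for all j. -/

import Mathlib

open Matrix
open scoped ComplexOrder

/-- The standard `2s × 2s` symplectic matrix: block diagonal with `s` blocks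
`[[0, -1], [1, 0]]`, indexed by `Fin 2 × Fin s`. -/
def stdSymplectic (s : ℕ) : Matrix (Fin 2 × Fin s) (Fin 2 × Fin s) ℝ :=
  Matrix.blockDiagonal fun _ : Fin s => !![0, -1; 1, 0]

section Aux

variable {n : Type*} [Fintype n] [DecidableEq n]

private lemma psd_smul {M : Matrix n n ℂ} (hM : M.PosSemidef) {c : ℂ} (hc : 0 ≤ c) :
    (c • M).PosSemidef := by
  have hcr : star c = c := by
    have him : c.im = 0 := by
      have := Complex.le_def.mp hc
      simpa using this.2.symm
    exact Complex.conj_eq_iff_im.mpr him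
  rw [posSemidef_iff_dotProduct_mulVec] at hM ⊢
  constructor
  · rw [IsHermitian, conjTranspose_smul, hcr, hM.1.eq]
  · intro x
    rw [smul_mulVec, dotProduct_smul, smul_eq_mul]
    exact mul_nonneg hc (hM.2 x)

private lemma pd_smul {M : Matrix n n ℂ} (hM : M.PosDef) {c : ℂ} (hc : 0 < c) :
    (c • M).PosDef := by
  have hcr : star c = c := by
    have him : c.im = 0 := by
      have := Complex.le_def.mp hc.le
      simpa using this.2.symm
    exact Complex.conj_eq_iff_im.mpr him
  rw [posDef_iff_dotProduct_mulVec] at hM ⊢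
  constructor
  · rw [IsHermitian, conjTranspose_smul, hcr, hM.1.eq]
  · intro x hx
    rw [smul_mulVec, dotProduct_smul, smul_eq_mul]
    exact mul_pos hc (hM.2 hx)

private lemma pd_conj {M : Matrix n n ℂ} (N : Matrix n n ℂ) (hN : IsUnit N)
    (hM : M.PosDef) : (Nᴴ * M * N).PosDef := by
  rw [posDef_iff_dotProduct_mulVec] at hM ⊢
  refine ⟨isHermitian_conjTranspose_mul_mul N hM.1, fun x hx => ?_⟩
  have hinj : Function.Injective (N.mulVec) := mulVec_injective_iff_isUnit.mpr hN
  have hNx : N *ᵥ x ≠ 0 := fun h => hx (hinj (by simpa using h))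
  simpa only [star_mulVec, dotProduct_mulVec, vecMul_vecMul] using hM.2 hNx

private lemma conj_inv_eq {M N : Matrix n n ℂ} (hN : IsUnit N) :
    (N⁻¹)ᴴ * (Nᴴ * M * N) * N⁻¹ = M := by
  have h1 : N * N⁻¹ = 1 := mul_nonsing_inv N ((isUnit_iff_isUnit_det N).mp hN)
  calc (N⁻¹)ᴴ * (Nᴴ * M * N) * N⁻¹ = (N * N⁻¹)ᴴ * M * (N * N⁻¹) := by
        rw [conjTranspose_mul]; noncomm_ring
    _ = M := by rw [h1, conjTranspose_one, one_mul, mul_one]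

private lemma psd_conj_iff {M : Matrix n n ℂ} (N : Matrix n n ℂ) (hN : IsUnit N) :
    (Nᴴ * M * N).PosSemidef ↔ M.PosSemidef := by
  constructor
  · intro h
    have := h.conjTranspose_mul_mul_same (N⁻¹)
    rwa [conj_inv_eq hN] at this
  · intro h; exact h.conjTranspose_mul_mul_same N

private lemma pd_conj_iff {M : Matrix n n ℂ} (N : Matrix n n ℂ) (hN : IsUnit N) :
    (Nᴴ * M * N).PosDef ↔ M.PosDef := by
  constructor
  · intro h
    have hNi : IsUnit (N⁻¹) := by
      rw [Matrix.isUnit_iff_isUnit_det]; apply Matrix.isUnit_nonsing_inv_det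
      exact (Matrix.isUnit_iff_isUnit_det N).mp hN
    have := pd_conj (N⁻¹) hNi h
    rwa [conj_inv_eq hN] at this
  · intro h; exact pd_conj N hN h

end Aux

section Block

variable {o m : Type*} [Fintype o] [Fintype m] [DecidableEq o] [DecidableEq m]

private lemma quad_blockDiagonal (f : o → Matrix m m ℂ) (x : m × o → ℂ) :
    star x ⬝ᵥ (blockDiagonal f) *ᵥ x
      = ∑ j, star (fun i => x (i, j)) ⬝ᵥ (f j) *ᵥ (fun i => x (i, j)) := by
  simp only [dotProduct, mulVec, blockDiagonal_apply, Pi.star_apply, Fintype.sum_prod_type,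
    ite_mul, zero_mul, Finset.sum_ite_eq, Finset.mem_univ, if_true]
  exact Finset.sum_comm

private lemma submatrix_blockDiagonal (f : o → Matrix m m ℂ) (j : o) :
    (blockDiagonal f).submatrix (fun i => (i, j)) (fun i => (i, j)) = f j := by
  ext i i'
  simp [blockDiagonal_apply]

private lemma blockDiagonal_herm {f : o → Matrix m m ℂ} (h : ∀ j, (f j).IsHermitian) :
    (blockDiagonal f).IsHermitian := by
  rw [IsHermitian, blockDiagonal_conjTranspose]
  exact congrArg _ (funext fun j => (h j).eq)

private lemma blockDiagonal_psd {f : o → Matrix m m ℂ} (h : ∀ j, (f j).PosSemidef) :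
    (blockDiagonal f).PosSemidef := by
  simp only [posSemidef_iff_dotProduct_mulVec] at h ⊢
  refine ⟨blockDiagonal_herm fun j => (h j).1, fun x => ?_⟩
  rw [quad_blockDiagonal]
  exact Finset.sum_nonneg fun j _ => (h j).2 _

private lemma blockDiagonal_pd {f : o → Matrix m m ℂ} (h : ∀ j, (f j).PosDef) :
    (blockDiagonal f).PosDef := by
  rw [posDef_iff_dotProduct_mulVec]
  refine ⟨blockDiagonal_herm fun j => (h j).1, fun x hx => ?_⟩
  obtain ⟨p, hp⟩ := Function.ne_iff.mp hx
  rw [quad_blockDiagonal]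
  refine Finset.sum_pos' (fun j _ => (posSemidef_iff_dotProduct_mulVec.mp (h j).posSemidef).2 _) ⟨p.2, Finset.mem_univ _, ?_⟩
  refine (posDef_iff_dotProduct_mulVec.mp (h p.2)).2 fun hc => hp ?_
  simpa using congrFun hc p.1

private lemma psd_block_of_blockDiagonal {f : o → Matrix m m ℂ}
    (h : (blockDiagonal f).PosSemidef) (j : o) : (f j).PosSemidef := by
  have := h.submatrix (fun i => (i, j))
  rwa [submatrix_blockDiagonal] at this

private lemma pd_block_of_blockDiagonal {f : o → Matrix m m ℂ}
    (h : (blockDiagonal f).PosDef) (j : o) : (f j).PosDef := by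
  rw [posDef_iff_dotProduct_mulVec]
  constructor
  · have := h.1.submatrix (fun i => (i, j))
    rwa [submatrix_blockDiagonal] at this
  · intro x hx
    set y : m × o → ℂ := fun p => if p.2 = j then x p.1 else 0 with hy
    have hyne : y ≠ 0 := by
      obtain ⟨i, hi⟩ := Function.ne_iff.mp hx
      intro hc
      apply hi
      have := congrFun hc (i, j)
      simpa [hy] using this
    have hpos := (posDef_iff_dotProduct_mulVec.mp h).2 hyne
    rw [quad_blockDiagonal] at hpos
    rw [Finset.sum_eq_single j] at hpos
    · simpa [hy] using hpos
    · intro b _ hb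
      simp [hy, hb, dotProduct]
    · intro hj; exact absurd (Finset.mem_univ j) hj

end Block

section TwoByTwo

private lemma gp_eq (e : ℝ) :
    (!![(e:ℂ), -(Complex.I/2); Complex.I/2, (e:ℂ)])
      = ((e - 1/2 : ℝ) : ℂ) • 1 + (1/2 : ℂ) • (!![1,0;Complex.I,0] * !![1,0;Complex.I,0]ᴴ) := by
  ext i j
  fin_cases i <;> fin_cases j <;>
    simp [Matrix.mul_apply, Fin.sum_univ_two, Matrix.one_apply, conjTranspose_apply,
      Matrix.vecMul, dotProduct, Complex.ext_iff]

private lemma gm_eq (e : ℝ) :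
    (!![(e:ℂ), Complex.I/2; -(Complex.I/2), (e:ℂ)])
      = ((e - 1/2 : ℝ) : ℂ) • 1 + (1/2 : ℂ) • (!![1,0;-Complex.I,0] * !![1,0;-Complex.I,0]ᴴ) := by
  ext i j
  fin_cases i <;> fin_cases j <;>
    simp [Matrix.mul_apply, Fin.sum_univ_two, Matrix.one_apply, conjTranspose_apply,
      Matrix.vecMul, dotProduct, Complex.ext_iff]

private lemma gp_psd {e : ℝ} (he : 1/2 ≤ e) :
    (!![(e:ℂ), -(Complex.I/2); Complex.I/2, (e:ℂ)]).PosSemidef := by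
  rw [gp_eq]
  refine PosSemidef.add (psd_smul PosSemidef.one ?_) (psd_smul (posSemidef_self_mul_conjTranspose _) ?_)
  · rw [Complex.zero_le_real]; linarith
  · rw [show ((1:ℂ)/2) = ((1/2 : ℝ) : ℂ) by norm_num, Complex.zero_le_real]; norm_num

private lemma gm_pd {e : ℝ} (he : 1/2 < e) :
    (!![(e:ℂ), Complex.I/2; -(Complex.I/2), (e:ℂ)]).PosDef := by
  rw [gm_eq]
  refine PosDef.add_posSemidef (pd_smul PosDef.one ?_) (psd_smul (posSemidef_self_mul_conjTranspose _) ?_)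
  · rw [Complex.zero_lt_real]; linarith
  · rw [show ((1:ℂ)/2) = ((1/2 : ℝ) : ℂ) by norm_num, Complex.zero_le_real]; norm_num

private lemma gp_quad (e : ℝ) :
    star ![1, -Complex.I] ⬝ᵥ (!![(e:ℂ), -(Complex.I/2); Complex.I/2, (e:ℂ)]) *ᵥ ![1, -Complex.I]
      = ((2*e - 1 : ℝ) : ℂ) := by
  simp [dotProduct, mulVec, Fin.sum_univ_two, Complex.ext_iff]
  ring

private lemma gm_quad (e : ℝ) :
    star ![1, Complex.I] ⬝ᵥ (!![(e:ℂ), Complex.I/2; -(Complex.I/2), (e:ℂ)]) *ᵥ ![1, Complex.I]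
      = ((2*e - 1 : ℝ) : ℂ) := by
  simp [dotProduct, mulVec, Fin.sum_univ_two, Complex.ext_iff]
  ring

private lemma gp_psd_rev {e : ℝ}
    (h : (!![(e:ℂ), -(Complex.I/2); Complex.I/2, (e:ℂ)]).PosSemidef) : 1/2 ≤ e := by
  have := (posSemidef_iff_dotProduct_mulVec.mp h).2 ![1, -Complex.I]
  rw [gp_quad] at this
  rw [Complex.zero_le_real] at this
  linarith

private lemma gm_pd_rev {e : ℝ}
    (h : (!![(e:ℂ), Complex.I/2; -(Complex.I/2), (e:ℂ)]).PosDef) : 1/2 < e := by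
  have hne : (![1, Complex.I] : Fin 2 → ℂ) ≠ 0 := by
    intro hc
    simpa using congrFun hc 0
  have := (posDef_iff_dotProduct_mulVec.mp h).2 hne
  rw [gm_quad] at this
  rw [Complex.zero_lt_real] at this
  linarith

end TwoByTwo

theorem gaussian_state_condition_symplectic_eigenvalues (s : ℕ) (hs : 1 ≤ s)
    (α : Matrix (Fin 2 × Fin s) (Fin 2 × Fin s) ℝ)
    (hα : α.PosDef) (hαsymm : α.IsSymm)
    (T : Matrix (Fin 2 × Fin s) (Fin 2 × Fin s) ℝ)
    (hT : Tᵀ * stdSymplectic s * T = stdSymplectic s)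
    (d : Fin s → ℝ) (hd : ∀ j, 0 < d j)
    (hTα : Tᵀ * α * T =
      Matrix.blockDiagonal (fun j : Fin s => d j • (1 : Matrix (Fin 2) (Fin 2) ℝ))) :
    ((α.map (Complex.ofReal) +
        (Complex.I / 2) • (stdSymplectic s).map (Complex.ofReal)).PosSemidef ↔
      ∀ j, 1 / 2 ≤ d j) ∧
    ((α.map (Complex.ofReal) -
        (Complex.I / 2) • (stdSymplectic s).map (Complex.ofReal)).PosDef ↔
      ∀ j, 1 / 2 < d j) := by
  classical
  set Δ := stdSymplectic s with hΔ
  -- T is invertible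
  have hdetΔ : Δ.det = 1 := by
    rw [hΔ, stdSymplectic, det_blockDiagonal]
    simp [Matrix.det_fin_two_of]
  have hdetT : T.det * T.det = 1 := by
    have := congrArg Matrix.det hT
    rwa [det_mul, det_mul, det_transpose, hdetΔ, mul_one, mul_comm] at this
  have hdetTne : T.det ≠ 0 := fun h => by simp [h] at hdetT
  set N : Matrix (Fin 2 × Fin s) (Fin 2 × Fin s) ℂ := T.map Complex.ofReal with hN
  have hNdet : N.det = (T.det : ℂ) := (Complex.ofRealHom.map_det T).symm
  have hNunit : IsUnit N := by
    rw [Matrix.isUnit_iff_isUnit_det, hNdet, isUnit_iff_ne_zero]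
    exact_mod_cast hdetTne
  have hNH : Nᴴ = Tᵀ.map Complex.ofReal := by
    ext i j
    simp [hN, conjTranspose_apply, Complex.conj_ofReal]
  have hmap : ∀ β : Matrix (Fin 2 × Fin s) (Fin 2 × Fin s) ℝ,
      Nᴴ * (β.map Complex.ofReal) * N = (Tᵀ * β * T).map Complex.ofReal := by
    intro β
    rw [hNH, hN]
    ext i j
    simp only [Matrix.mul_apply, Matrix.map_apply]
    push_cast
    rfl
  have hconj : ∀ c : ℂ,
      Nᴴ * (α.map Complex.ofReal + c • Δ.map Complex.ofReal) * N
        = (Tᵀ * α * T).map Complex.ofReal + c • (Tᵀ * Δ * T).map Complex.ofReal := by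
    intro c
    rw [mul_add, add_mul, hmap α, mul_smul_comm, smul_mul_assoc, hmap Δ]
  -- the block-diagonal forms
  have hplus : (Tᵀ * α * T).map Complex.ofReal + (Complex.I/2) • (Tᵀ * Δ * T).map Complex.ofReal
      = blockDiagonal (fun j => !![(d j : ℂ), -(Complex.I/2); Complex.I/2, (d j : ℂ)]) := by
    rw [hTα, hT, hΔ, stdSymplectic]
    ext ⟨i, j⟩ ⟨i', j'⟩
    by_cases hjj : j = j'
    · subst hjj
      fin_cases i <;> fin_cases i' <;>
        simp [blockDiagonal_apply, Matrix.one_apply, Complex.ext_iff]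
    · simp [blockDiagonal_apply, hjj]
  have hminus : (Tᵀ * α * T).map Complex.ofReal + (-(Complex.I/2)) • (Tᵀ * Δ * T).map Complex.ofReal
      = blockDiagonal (fun j => !![(d j : ℂ), Complex.I/2; -(Complex.I/2), (d j : ℂ)]) := by
    rw [hTα, hT, hΔ, stdSymplectic]
    ext ⟨i, j⟩ ⟨i', j'⟩
    by_cases hjj : j = j'
    · subst hjj
      fin_cases i <;> fin_cases i' <;>
        simp [blockDiagonal_apply, Matrix.one_apply, Complex.ext_iff]
    · simp [blockDiagonal_apply, hjj]
  constructor
  · rw [← psd_conj_iff N hNunit, hconj (Complex.I/2), hplus]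
    constructor
    · intro h j
      exact gp_psd_rev (psd_block_of_blockDiagonal h j)
    · intro h
      exact blockDiagonal_psd fun j => gp_psd (h j)
  · rw [sub_eq_add_neg, show -((Complex.I/2) • Δ.map Complex.ofReal)
        = (-(Complex.I/2)) • Δ.map Complex.ofReal from (neg_smul _ _).symm,
      ← pd_conj_iff N hNunit, hconj (-(Complex.I/2)), hminus]
    constructor
    · intro h j
      exact gm_pd_rev (pd_block_of_blockDiagonal h j)
    · intro h
      exact blockDiagonal_pd fun j => gm_pd (h j)
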